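/- Let k be an algebraically closed field of characteristic 0 and ζ ∈ k a primitive 3rd root of unity. Let the 2×2 braiding matrix be q_{11} = ζ, q_{12} = −ζ, q_{21} = ζ, q_{22} = −ζ (modular type br(2,a)). Then for every λ ∈ k, the quotient of the free algebra k⟨y_1,y_2⟩ by the two-sided ideal generated by y_1³ and y_{221} − λ is a nontrivial algebra. -/

import Mathlib

/-- The `q`-bilinear form `q(α,β) = ∏ i j, (q i j) ^ (α i * β j)` on `ℕⁿ`-degrees. -/
noncomputable def qForm {k : Type*} [Field k] {n : ℕ} (q : Fin n → Fin n → k)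
    (α β : Fin n → ℕ) : k :=
  ∏ i : Fin n, ∏ j : Fin n, q i j ^ (α i * β j)

/-- The braided commutator on pairs (homogeneous element, its `ℕⁿ`-degree):
`[u,v]_c = u v − q(deg u, deg v) v u`. -/
noncomputable def bc {k : Type*} [Field k] {n : ℕ} (q : Fin n → Fin n → k)
    (u v : FreeAlgebra k (Fin n) × (Fin n → ℕ)) :
    FreeAlgebra k (Fin n) × (Fin n → ℕ) :=
  (u.1 * v.1 - qForm q u.2 v.2 • (v.1 * u.1), fun i => u.2 i + v.2 i)

/-- The generator `y i` of the free algebra, together with its degree `e_i`. -/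
noncomputable def ygen (k : Type*) [Field k] {n : ℕ} (i : Fin n) :
    FreeAlgebra k (Fin n) × (Fin n → ℕ) :=
  (FreeAlgebra.ι k i, fun j => if j = i then 1 else 0)

theorem statement_8 {k : Type*} [Field k] [IsAlgClosed k] [CharZero k]
    (ζ : k) (hζ : IsPrimitiveRoot ζ 3)
    (lam : k)
    (q : Fin 2 → Fin 2 → k) (hq : q = ![![ζ, -ζ], ![ζ, -ζ]]) :
    (1 : FreeAlgebra k (Fin 2)) ∉ TwoSidedIdeal.span
      ({FreeAlgebra.ι k (0 : Fin 2) ^ 3,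
        (bc q (ygen k 1) (bc q (ygen k 1) (ygen k 0))).1 - algebraMap k (FreeAlgebra k (Fin 2)) lam} : Set (FreeAlgebra k (Fin 2))) := by
  have hζ3 : ζ ^ 3 = 1 := hζ.pow_eq_one
  have hne : ζ ≠ 1 := hζ.ne_one (by norm_num)
  have hsum : ζ ^ 2 + ζ + 1 = 0 := by
    have h0 : (ζ - 1) * (ζ ^ 2 + ζ + 1) = 0 := by linear_combination hζ3
    rcases mul_eq_zero.mp h0 with h | h
    · exact absurd (sub_eq_zero.mp h) hne
    · exact h
  -- the representation
  set N : Matrix (Fin 3) (Fin 3) k := ![![0,1,0],![0,0,1],![0,0,0]] with hN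
  set B : Matrix (Fin 3) (Fin 3) k := ![![0,ζ,0],![0,0,-ζ^2],![1,0,0]] with hB
  set φ : FreeAlgebra k (Fin 2) →ₐ[k] Matrix (Fin 3) (Fin 3) k :=
    FreeAlgebra.lift k ![lam • N, B] with hφ
  intro hmem
  have hφ0 : φ (FreeAlgebra.ι k (0 : Fin 2)) = lam • N := by
    simp only [hφ, FreeAlgebra.lift_ι_apply, Matrix.cons_val_zero]
  have hφ1 : φ (FreeAlgebra.ι k (1 : Fin 2)) = B := by
    simp only [hφ, FreeAlgebra.lift_ι_apply, Matrix.cons_val_one, Matrix.head_cons, Matrix.cons_val_zero]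
  have hker : (1 : FreeAlgebra k (Fin 2)) ∈ TwoSidedIdeal.ker (φ : FreeAlgebra k (Fin 2) →+* Matrix (Fin 3) (Fin 3) k) := by
    refine TwoSidedIdeal.mem_span_iff.mp hmem _ ?_
    intro x hx
    rw [SetLike.mem_coe, TwoSidedIdeal.mem_ker]
    rcases hx with h | h
    · -- y₀³ ↦ (lam • N)³ = 0
      subst h
      have hN3 : N ^ 3 = 0 := by
        ext i j
        simp only [pow_three, Matrix.mul_apply, Fin.sum_univ_three]
        fin_cases i <;> fin_cases j <;>
          simp [pow_succ, hN, Matrix.mul_apply, Fin.sum_univ_three,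
            Matrix.vecHead, Matrix.vecTail]
      show φ _ = 0
      rw [map_pow, hφ0, smul_pow, hN3, smul_zero]
    · -- deformed Serre relation
      simp only [Set.mem_singleton_iff] at h
      subst h
      have hc1 : qForm q (ygen k (1 : Fin 2)).2 (ygen k (0 : Fin 2)).2 = ζ := by
        simp [qForm, ygen, Fin.prod_univ_two, hq]
      have hc2 : qForm q (ygen k (1 : Fin 2)).2
          (fun i => (ygen k (1 : Fin 2)).2 i + (ygen k (0 : Fin 2)).2 i) = -ζ^2 := by
        simp [qForm, ygen, Fin.prod_univ_two, hq]
        ring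
      have key : B * (B * (lam • N) - ζ • (lam • N * B))
          - (-ζ ^ 2) • ((B * (lam • N) - ζ • (lam • N * B)) * B) - lam • 1 = 0 := by
        ext i j
        simp only [Matrix.sub_apply, Matrix.mul_apply, Matrix.smul_apply, Fin.sum_univ_three]
        fin_cases i <;> fin_cases j <;>
          simp [hN, hB, Matrix.mul_apply, Fin.sum_univ_three, Matrix.one_apply,
            Matrix.vecHead, Matrix.vecTail, -mul_eq_zero] <;>
          first
            | linear_combination lam * (ζ^3 - ζ^2 + ζ - 1) * hsum
            | linear_combination lam * (-ζ^2 + ζ - 1) * hsum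
            | linear_combination lam * (-ζ^2 + 2*ζ - 1) * hsum
            | linear_combination (-lam) * (ζ^3 - ζ^2 + ζ - 1) * hsum
            | linear_combination (-lam) * (-ζ^2 + ζ - 1) * hsum
            | linear_combination (-lam) * (-ζ^2 + 2*ζ - 1) * hsum
      show φ _ = 0
      simp only [bc]
      rw [hc1, hc2]
      simp only [ygen, map_sub, map_mul, map_smul, hφ0, hφ1,
        Algebra.algebraMap_eq_smul_one, map_smul, map_one]
      exact key
  rw [TwoSidedIdeal.mem_ker] at hker
  simp only [map_one] at hker
  exact one_ne_zero hker
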